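/- Let (Z_n)_{n≥1} be a chain with complete connections with values in a finite alphabet Σ, minorized by α > 0: Pr(Z_1 = σ_1) ≥ α for all σ_1 ∈ Σ, and Pr(Z_n = σ_n | Z_{n-1} = σ_{n-1}, …, Z_1 = σ_1) ≥ α for all n ≥ 2 and all σ_1, …, σ_n ∈ Σ. Let μ be the joint distribution of (Z_1, Z_2, …) on the Cantor space (Σ^∞, ϱ) with the Baire metric. Then μ satisfies the doubling condition: there exist r_0, c > 0 such that μ(N_{2r}{ψ}) ≤ c · μ(N_r{ψ}) for all ψ ∈ Σ^∞ and 0 < r < r_0 (indeed one may take c = 1/α); consequently the set of non-disjunctive sequences is μ-null and the chain generates a disjunctive sequence almost surely. -/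

import Mathlib

open Metric Filter Set MeasureTheory

/-- A sequence of symbols is disjunctive if it contains every finite word
as a block of consecutive letters. -/
def Disjunctive {Γ : Type*} (σ : ℕ → Γ) : Prop :=
  ∀ (m : ℕ) (w : Fin m → Γ), ∃ j : ℕ, ∀ l : Fin m, σ (j + l.1) = w l

open Classical in
/-- The Baire metric `ϱ(x,y) = 2^{-min{i ≥ 1 : x_i ≠ y_i}}` on the Cantor space of
(0-indexed) sequences: here `min` of the 1-indexed paper corresponds to `sInf + 1`. -/
noncomputable def baireDist {Γ : Type*} (x y : ℕ → Γ) : ℝ :=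
  if x = y then 0 else (2 : ℝ) ^ (-((sInf {i : ℕ | x i ≠ y i} : ℕ) : ℤ) - 1)

/-- `Ψ` is porous with respect to the distance function `ρ`. -/
def PorousWith {M : Type*} (ρ : M → M → ℝ) (Ψ : Set M) : Prop :=
  ∃ lam : ℝ, 0 < lam ∧ lam < 1 ∧ ∃ r₀ : ℝ, 0 < r₀ ∧
    ∀ ψ ∈ Ψ, ∀ r : ℝ, 0 < r → r < r₀ →
      ∃ υ : M, {x : M | ρ υ x < lam * r} ⊆ {x : M | ρ ψ x < r} \ Ψ

/-- `Ψ` is σ-porous with respect to `ρ`: a countable union of porous sets. -/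
def SigmaPorousWith {M : Type*} (ρ : M → M → ℝ) (Ψ : Set M) : Prop :=
  ∃ c : ℕ → Set M, (∀ n : ℕ, PorousWith ρ (c n)) ∧ Ψ = ⋃ n : ℕ, c n

section ChainCCAux

set_option linter.unusedSectionVars false

variable {Γ : Type*} [Fintype Γ] [DecidableEq Γ] [MeasurableSpace Γ] [MeasurableSingletonClass Γ]
variable {S : Type*} [MeasurableSpace S] (Pr : Measure S) (Z : ℕ → S → Γ)
variable (α : ENNReal)

private lemma chainCC_meas_fiber (hZ : ∀ n, Measurable (Z n)) (n : ℕ) (v : Fin n → Γ) :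
    MeasurableSet {s | (fun i : Fin n => Z i.1 s) = v} := by
  have h : {s | (fun i : Fin n => Z i.1 s) = v} = ⋂ i : Fin n, (Z i.1) ⁻¹' {v i} := by
    ext s; simp [funext_iff]
  rw [h]
  exact MeasurableSet.iInter fun i => (hZ i.1) (measurableSet_singleton _)

private lemma chainCC_fiber_sum (hZ : ∀ n, Measurable (Z n)) (n : ℕ) (T : Finset (Fin n → Γ)) :
    Pr {s | (fun i : Fin n => Z i.1 s) ∈ T}
      = ∑ v ∈ T, Pr {s | (fun i : Fin n => Z i.1 s) = v} := by
  have h : {s | (fun i : Fin n => Z i.1 s) ∈ T}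
      = ⋃ v ∈ T, {s | (fun i : Fin n => Z i.1 s) = v} := by
    ext s; simp
  rw [h, measure_biUnion_finset ?_ fun v _ => chainCC_meas_fiber Z hZ n v]
  intro v _ u hu hvu
  simp only [Function.onFun]
  rw [Set.disjoint_left]
  rintro s hs hs'
  exact hvu (hs.symm.trans hs')

private lemma chainCC_append_letter (hZ : ∀ n, Measurable (Z n))
    (hmin : ∀ (n : ℕ) (w : Fin (n + 1) → Γ),
      α * Pr {s : S | ∀ i : Fin n, Z i.1 s = w i.castSucc}
        ≤ Pr {s : S | ∀ i : Fin (n + 1), Z i.1 s = w i})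
    (n : ℕ) (T : Finset (Fin n → Γ)) (γ : Γ) :
    α * Pr {s | (fun i : Fin n => Z i.1 s) ∈ T}
      ≤ Pr {s | (fun i : Fin (n+1) => Z i.1 s) ∈ T.image (fun v => Fin.snoc v γ)} := by
  classical
  rw [chainCC_fiber_sum Pr Z hZ n T, chainCC_fiber_sum Pr Z hZ (n+1) _, Finset.mul_sum,
    Finset.sum_image (fun v _ u _ h => by
      have h2 := congrArg Fin.init h
      simpa [Fin.init_snoc] using h2)]
  refine Finset.sum_le_sum fun v _ => ?_
  have h := hmin n (Fin.snoc v γ)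
  have e1 : {s | ∀ i : Fin n, Z i.1 s = (Fin.snoc v γ : Fin (n+1) → Γ) i.castSucc}
      = {s | (fun i : Fin n => Z i.1 s) = v} := by
    ext s; simp [funext_iff, Fin.snoc_castSucc]
  have e2 : {s | ∀ i : Fin (n+1), Z i.1 s = (Fin.snoc v γ : Fin (n+1) → Γ) i}
      = {s | (fun i : Fin (n+1) => Z i.1 s) = Fin.snoc v γ} := by
    ext s; simp [funext_iff]
  rw [e1, e2] at h
  exact h

private lemma chainCC_append_word (hZ : ∀ n, Measurable (Z n))
    (hmin : ∀ (n : ℕ) (w : Fin (n + 1) → Γ),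
      α * Pr {s : S | ∀ i : Fin n, Z i.1 s = w i.castSucc}
        ≤ Pr {s : S | ∀ i : Fin (n + 1), Z i.1 s = w i}) :
    ∀ (m : ℕ) (w : Fin m → Γ) (n : ℕ) (T : Finset (Fin n → Γ)),
    α ^ m * Pr {s | (fun i : Fin n => Z i.1 s) ∈ T}
      ≤ Pr {s | (fun i : Fin n => Z i.1 s) ∈ T ∧ ∀ l : Fin m, Z (n + l.1) s = w l} := by
  intro m
  induction m with
  | zero =>
    intro w n T
    simp
  | succ m IH =>
    intro w n T
    set T' : Finset (Fin (n+1) → Γ) := T.image (fun v => Fin.snoc v (w 0)) with hT'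
    have h1 : α ^ (m+1) * Pr {s | (fun i : Fin n => Z i.1 s) ∈ T}
        ≤ α ^ m * Pr {s | (fun i : Fin (n+1) => Z i.1 s) ∈ T'} := by
      rw [pow_succ, mul_assoc]
      exact mul_le_mul_right (chainCC_append_letter Pr Z α hZ hmin n T (w 0)) _
    have h2 := IH (fun l => w l.succ) (n+1) T'
    refine h1.trans (h2.trans (measure_mono ?_))
    rintro s ⟨hsT', hblk⟩
    obtain ⟨v, hvT, hveq⟩ := Finset.mem_image.mp hsT'
    have hv : v = fun i : Fin n => Z i.1 s := by
      funext i
      have := congrFun hveq i.castSucc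
      simpa [Fin.snoc_castSucc] using this
    have hlast : Z n s = w 0 := by
      have := congrFun hveq (Fin.last n)
      simpa [Fin.snoc_last] using this.symm
    refine ⟨hv ▸ hvT, fun l => ?_⟩
    refine Fin.cases ?_ ?_ l
    · simpa using hlast
    · intro l'
      have := hblk l'
      have harith : n + (l'.succ : Fin (m+1)).1 = n + 1 + l'.1 := by simp; omega
      rw [harith]
      exact this

private lemma chainCC_avoid_bound [IsProbabilityMeasure Pr] (hZ : ∀ n, Measurable (Z n))
    (hmin : ∀ (n : ℕ) (w : Fin (n + 1) → Γ),
      α * Pr {s : S | ∀ i : Fin n, Z i.1 s = w i.castSucc}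
        ≤ Pr {s : S | ∀ i : Fin (n + 1), Z i.1 s = w i})
    (m : ℕ) (w : Fin m → Γ) (N : ℕ) :
    Pr {s | ∀ j < N, ∃ l : Fin m, Z (j * m + l.1) s ≠ w l} ≤ (1 - α ^ m) ^ N := by
  classical
  induction N with
  | zero => simp
  | succ N IH =>
    have hidx : ∀ (j : Fin N) (l : Fin m), j.1 * m + l.1 < N * m := fun j l => by
      calc j.1 * m + l.1 < (j.1 + 1) * m := by have := l.2; rw [Nat.succ_mul]; omega
        _ ≤ N * m := Nat.mul_le_mul_right m j.2
    set E : Set S := {s | ∀ j < N, ∃ l : Fin m, Z (j * m + l.1) s ≠ w l} with hE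
    set B : Set S := {s | ∀ l : Fin m, Z (N * m + l.1) s = w l} with hB
    have hEN1 : {s | ∀ j < N + 1, ∃ l : Fin m, Z (j * m + l.1) s ≠ w l} = E \ B := by
      ext s
      simp only [hE, hB, Set.mem_diff, Set.mem_setOf_eq, not_forall]
      constructor
      · intro h
        exact ⟨fun j hj => h j (by omega), by obtain ⟨l, hl⟩ := h N (by omega); exact ⟨l, hl⟩⟩
      · rintro ⟨h1, l, hl⟩ j hj
        rcases Nat.lt_succ_iff_lt_or_eq.mp hj with hj' | rfl
        · exact h1 j hj'
        · exact ⟨l, hl⟩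
    set T : Finset (Fin (N * m) → Γ) :=
      Finset.univ.filter (fun v => ∀ j : Fin N, ∃ l : Fin m, v ⟨j.1 * m + l.1, hidx j l⟩ ≠ w l)
      with hT
    have hET : E = {s | (fun i : Fin (N * m) => Z i.1 s) ∈ T} := by
      ext s
      simp only [hE, hT, Set.mem_setOf_eq, Finset.mem_coe, Finset.mem_filter,
        Finset.mem_univ, true_and]
      constructor
      · intro h j
        obtain ⟨l, hl⟩ := h j.1 j.2
        exact ⟨l, hl⟩
      · intro h j hj
        obtain ⟨l, hl⟩ := h ⟨j, hj⟩
        exact ⟨l, hl⟩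
    have happ := chainCC_append_word Pr Z α hZ hmin m w (N * m) T
    have hEB : {s | (fun i : Fin (N * m) => Z i.1 s) ∈ T ∧ ∀ l : Fin m, Z (N * m + l.1) s = w l}
        = E ∩ B := by
      rw [hET]; rfl
    rw [hEB, ← hET] at happ
    have hBmeas : MeasurableSet B := by
      have : B = ⋂ l : Fin m, (Z (N * m + l.1)) ⁻¹' {w l} := by
        ext s; simp [hB]
      rw [this]
      exact MeasurableSet.iInter fun l => (hZ _) (measurableSet_singleton _)
    have hsplit : Pr (E ∩ B) + Pr (E \ B) = Pr E := measure_inter_add_diff E hBmeas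
    have hle : Pr (E \ B) ≤ Pr E - α ^ m * Pr E := by
      have h1 : Pr (E \ B) ≤ Pr E - Pr (E ∩ B) :=
        ENNReal.le_sub_of_add_le_left (measure_ne_top Pr _) hsplit.le
      exact h1.trans (tsub_le_tsub_left happ _)
    have heq : (1 - α ^ m) * Pr E = Pr E - α ^ m * Pr E := by
      rw [ENNReal.sub_mul (fun _ _ => measure_ne_top Pr E), one_mul]
    rw [hEN1]
    calc Pr (E \ B) ≤ (1 - α ^ m) * Pr E := by rw [heq]; exact hle
      _ ≤ (1 - α ^ m) * (1 - α ^ m) ^ N := mul_le_mul_right IH _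
      _ = (1 - α ^ m) ^ (N + 1) := (pow_succ' _ _).symm

private lemma chainCC_avoid_zero [IsProbabilityMeasure Pr] (hZ : ∀ n, Measurable (Z n))
    (hmin : ∀ (n : ℕ) (w : Fin (n + 1) → Γ),
      α * Pr {s : S | ∀ i : Fin n, Z i.1 s = w i.castSucc}
        ≤ Pr {s : S | ∀ i : Fin (n + 1), Z i.1 s = w i})
    (hα0 : α ≠ 0) (m : ℕ) (w : Fin m → Γ) :
    Pr {s | ∀ j : ℕ, ∃ l : Fin m, Z (j + l.1) s ≠ w l} = 0 := by
  have hsub : ∀ N : ℕ, Pr {s | ∀ j : ℕ, ∃ l : Fin m, Z (j + l.1) s ≠ w l} ≤ (1 - α ^ m) ^ N := by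
    intro N
    refine (measure_mono ?_).trans (chainCC_avoid_bound Pr Z α hZ hmin m w N)
    intro s hs j _
    exact hs (j * m)
  have hlt : (1 - α ^ m) < 1 :=
    ENNReal.sub_lt_self ENNReal.one_ne_top one_ne_zero (pow_ne_zero m hα0)
  have htend := ENNReal.tendsto_pow_atTop_nhds_zero_of_lt_one hlt
  exact le_antisymm (ge_of_tendsto' htend hsub) zero_le

end ChainCCAux

private lemma chainCC_exists_pow {r : ℝ} (hr : 0 < r) :
    ∃ n : ℕ, (2:ℝ) ^ (-(n:ℤ) - 1) < r := by
  obtain ⟨n, hn⟩ := exists_pow_lt_of_lt_one hr (by norm_num : (1/2 : ℝ) < 1)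
  refine ⟨n, lt_of_le_of_lt ?_ hn⟩
  have h1 : (2:ℝ) ^ (-(n:ℤ) - 1) = ((1:ℝ)/2) ^ (n+1) := by
    rw [one_div, inv_pow, ← zpow_natCast, ← zpow_neg]
    congr 1
    push_cast
    ring
  rw [h1]
  exact pow_le_pow_of_le_one (by norm_num) (by norm_num) (Nat.le_succ n)

private lemma chainCC_ball_eq {Γ : Type*} (ψ : ℕ → Γ) {r : ℝ} (hr : 0 < r) (n : ℕ)
    (h1 : (2:ℝ) ^ (-(n:ℤ) - 1) < r) (h2 : ∀ k < n, ¬((2:ℝ) ^ (-(k:ℤ) - 1) < r)) :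
    {x : ℕ → Γ | baireDist ψ x < r} = {x | ∀ i < n, x i = ψ i} := by
  classical
  ext x
  simp only [Set.mem_setOf_eq, baireDist]
  by_cases hxy : ψ = x
  · subst hxy
    simp [hr]
  · rw [if_neg hxy]
    have hne : {i : ℕ | ψ i ≠ x i}.Nonempty := by
      rw [Set.nonempty_def]
      by_contra h
      push_neg at h
      simp only [Set.mem_setOf_eq, not_not] at h
      exact hxy (funext h)
    set k := sInf {i : ℕ | ψ i ≠ x i} with hk
    have hkmem : ψ k ≠ x k := Nat.sInf_mem hne
    constructor
    · intro hlt i hi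
      have hkn : n ≤ k := by
        by_contra h
        exact h2 k (by omega) hlt
      by_contra hne'
      have : k ≤ i := Nat.sInf_le (by simpa [hk] using (Ne.symm hne'))
      omega
    · intro h
      have hnk : n ≤ k := by
        by_contra hc
        exact hkmem ((h k (by omega)).symm)
      calc (2:ℝ) ^ (-(k:ℤ) - 1) ≤ (2:ℝ) ^ (-(n:ℤ) - 1) := by
            apply zpow_le_zpow_right₀ one_le_two
            omega
        _ < r := h1

/-- chains with complete connections: if the process `(Z_n)` is
minorized by `α > 0` (initial distribution and all conditional marginals are `≥ α`,
expressed below via joint distributions), then the joint distribution `μ` of the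
process on the Cantor space satisfies the doubling condition with constant `1/α`,
the set of non-disjunctive sequences is `μ`-null, and the chain generates a
disjunctive sequence almost surely. -/
theorem chain_complete_connections_doubling_and_disjunctive
    {Γ : Type*} [Fintype Γ] [Nonempty Γ] [MeasurableSpace Γ] [MeasurableSingletonClass Γ]
    {S : Type*} [MeasurableSpace S] (Pr : Measure S) [IsProbabilityMeasure Pr]
    (Z : ℕ → S → Γ) (hZ : ∀ n : ℕ, Measurable (Z n))
    (α : ENNReal) (hα : 0 < α)
    (hmin : ∀ (n : ℕ) (w : Fin (n + 1) → Γ),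
      α * Pr {s : S | ∀ i : Fin n, Z i.1 s = w i.castSucc}
        ≤ Pr {s : S | ∀ i : Fin (n + 1), Z i.1 s = w i}) :
    (∃ r₀ : ℝ, 0 < r₀ ∧ ∀ (ψ : ℕ → Γ) (r : ℝ), 0 < r → r < r₀ →
        (Measure.map (fun s n => Z n s) Pr) {x : ℕ → Γ | baireDist ψ x < 2 * r}
          ≤ α⁻¹ * (Measure.map (fun s n => Z n s) Pr) {x : ℕ → Γ | baireDist ψ x < r}) ∧
    (Measure.map (fun s n => Z n s) Pr) {σ : ℕ → Γ | ¬ Disjunctive σ} = 0 ∧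
    Pr {s : S | Disjunctive (fun n : ℕ => Z n s)} = 1 := by
  classical
  have hmeasF : Measurable (fun s (n : ℕ) => Z n s) := measurable_pi_lambda _ hZ
  have hα0 : α ≠ 0 := hα.ne'
  have hαtop : α ≠ ⊤ := by
    have h := hmin 0 (fun _ => Classical.arbitrary Γ)
    have he : {s : S | ∀ i : Fin 0, Z i.1 s = (fun _ => Classical.arbitrary Γ) i.castSucc}
        = Set.univ := by ext s; simp
    rw [he, measure_univ, mul_one] at h
    exact ne_top_of_le_ne_top (measure_ne_top Pr _) h
  -- measurability of the disjunctive set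
  have hDmeas : MeasurableSet {σ : ℕ → Γ | Disjunctive σ} := by
    have h : {σ : ℕ → Γ | Disjunctive σ}
        = ⋂ m : ℕ, ⋂ w : Fin m → Γ, ⋃ j : ℕ, ⋂ l : Fin m,
            (fun σ : ℕ → Γ => σ (j + l.1)) ⁻¹' {w l} := by
      ext σ
      simp [Disjunctive]
    rw [h]
    exact MeasurableSet.iInter fun m => MeasurableSet.iInter fun w =>
      MeasurableSet.iUnion fun j => MeasurableSet.iInter fun l =>
        measurable_pi_apply (j + l.1) (measurableSet_singleton (w l))
  -- the event of non-disjunctiveness in S is null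
  have hnull : Pr {s : S | ¬ Disjunctive (fun n : ℕ => Z n s)} = 0 := by
    refine measure_mono_null (t := ⋃ m : ℕ, ⋃ w : Fin m → Γ,
        {s : S | ∀ j : ℕ, ∃ l : Fin m, Z (j + l.1) s ≠ w l}) ?_ ?_
    · intro s hs
      simp only [Set.mem_setOf_eq, Disjunctive, not_forall, not_exists] at hs
      obtain ⟨m, w, hw⟩ := hs
      refine Set.mem_iUnion.mpr ⟨m, Set.mem_iUnion.mpr ⟨w, ?_⟩⟩
      intro j
      exact hw j
    · exact measure_iUnion_null fun m => measure_iUnion_null fun w =>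
        chainCC_avoid_zero Pr Z α hZ hmin hα0 m w
  have hpre : (fun s (n : ℕ) => Z n s) ⁻¹' {σ : ℕ → Γ | Disjunctive σ}
      = {s : S | Disjunctive (fun n : ℕ => Z n s)} := rfl
  have hmap0 : (Measure.map (fun s n => Z n s) Pr) {σ : ℕ → Γ | ¬ Disjunctive σ} = 0 := by
    have hc : {σ : ℕ → Γ | ¬ Disjunctive σ} = {σ : ℕ → Γ | Disjunctive σ}ᶜ := rfl
    rw [hc, Measure.map_apply hmeasF hDmeas.compl]
    exact hnull
  refine ⟨?_, hmap0, ?_⟩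
  · -- doubling
    refine ⟨1/2, by norm_num, ?_⟩
    intro ψ r hr hr2
    obtain hex := chainCC_exists_pow (by linarith : (0:ℝ) < 2 * r)
    set n2 := Nat.find hex with hn2
    have hP2 : (2:ℝ) ^ (-(n2:ℤ) - 1) < 2 * r := Nat.find_spec hex
    have hmin2 : ∀ k < n2, ¬((2:ℝ) ^ (-(k:ℤ) - 1) < 2 * r) := fun k hk => Nat.find_min hex hk
    have hb2 : {x : ℕ → Γ | baireDist ψ x < 2 * r} = {x | ∀ i < n2, x i = ψ i} :=
      chainCC_ball_eq ψ (by linarith) n2 hP2 hmin2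
    have hhalf : ∀ k : ℕ, (2:ℝ) ^ (-((k+1 : ℕ):ℤ) - 1) = (2:ℝ) ^ (-(k:ℤ) - 1) / 2 := by
      intro k
      rw [div_eq_mul_inv, ← zpow_neg_one (2:ℝ), ← zpow_add₀ (by norm_num : (2:ℝ) ≠ 0)]
      congr 1
      push_cast
      ring
    have hb1 : {x : ℕ → Γ | baireDist ψ x < r} = {x | ∀ i < n2 + 1, x i = ψ i} := by
      apply chainCC_ball_eq ψ hr
      · rw [hhalf n2]; linarith
      · intro k hk
        match k with
        | 0 =>
          simp only [Nat.cast_zero, neg_zero, zero_sub]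
          rw [zpow_neg_one]
          push_neg
          norm_num
          linarith
        | (k' + 1) =>
          have hk' : k' < n2 := by omega
          have := hmin2 k' hk'
          push_neg at this ⊢
          rw [hhalf k']
          linarith
    -- cylinder measurability and transfer
    have hcylmeas : ∀ k : ℕ, MeasurableSet {x : ℕ → Γ | ∀ i < k, x i = ψ i} := by
      intro k
      have h : {x : ℕ → Γ | ∀ i < k, x i = ψ i}
          = ⋂ i : Fin k, (fun x : ℕ → Γ => x i.1) ⁻¹' {ψ i.1} := by
        ext x
        simp only [Set.mem_setOf_eq, Set.mem_iInter, Set.mem_preimage, Set.mem_singleton_iff]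
        exact ⟨fun h i => h i.1 i.2, fun h i hi => h ⟨i, hi⟩⟩
      rw [h]
      exact MeasurableSet.iInter fun i =>
        measurable_pi_apply i.1 (measurableSet_singleton _)
    have hcylmap : ∀ k : ℕ,
        (Measure.map (fun s n => Z n s) Pr) {x : ℕ → Γ | ∀ i < k, x i = ψ i}
          = Pr {s : S | ∀ i < k, Z i s = ψ i} := by
      intro k
      rw [Measure.map_apply hmeasF (hcylmeas k)]
      rfl
    have hstep : Pr {s : S | ∀ i < n2, Z i s = ψ i}
        ≤ α⁻¹ * Pr {s : S | ∀ i < n2 + 1, Z i s = ψ i} := by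
      have h := hmin n2 (fun i : Fin (n2 + 1) => ψ i.1)
      have e1 : {s : S | ∀ i : Fin n2, Z i.1 s = (fun i : Fin (n2+1) => ψ i.1) i.castSucc}
          = {s : S | ∀ i < n2, Z i s = ψ i} := by
        ext s
        simp only [Set.mem_setOf_eq, Fin.coe_castSucc]
        exact ⟨fun h i hi => h ⟨i, hi⟩, fun h i => h i.1 i.2⟩
      have e2 : {s : S | ∀ i : Fin (n2+1), Z i.1 s = (fun i : Fin (n2+1) => ψ i.1) i}
          = {s : S | ∀ i < n2 + 1, Z i s = ψ i} := by
        ext s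
        simp only [Set.mem_setOf_eq]
        exact ⟨fun h i hi => h ⟨i, hi⟩, fun h i => h i.1 i.2⟩
      rw [e1, e2] at h
      calc Pr {s : S | ∀ i < n2, Z i s = ψ i}
          = α⁻¹ * (α * Pr {s : S | ∀ i < n2, Z i s = ψ i}) := by
            rw [← mul_assoc, ENNReal.inv_mul_cancel hα0 hαtop, one_mul]
        _ ≤ α⁻¹ * Pr {s : S | ∀ i < n2 + 1, Z i s = ψ i} := mul_le_mul_right h _
    rw [hb1, hb2, hcylmap, hcylmap]
    exact hstep
  · -- almost sure disjunctiveness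
    have hAmeas : MeasurableSet {s : S | Disjunctive (fun n : ℕ => Z n s)} := by
      rw [← hpre]
      exact hmeasF hDmeas
    have hcompl : Pr {s : S | Disjunctive (fun n : ℕ => Z n s)}ᶜ = 0 := by
      have : {s : S | Disjunctive (fun n : ℕ => Z n s)}ᶜ
          = {s : S | ¬ Disjunctive (fun n : ℕ => Z n s)} := rfl
      rw [this]
      exact hnull
    have := measure_add_measure_compl (μ := Pr) hAmeas
    rw [hcompl, add_zero] at this
    simpa using this
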